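/- (Existence of boundary values for the decoded model output.) Let d ≥ 1 and let v : ℝ → ℝ^d. Suppose there are u, w ∈ ℝ^d with Var(u) > 0 such that v(x) − (x·u + w) → 0 as x → +∞, and u′, w′ ∈ ℝ^d with Var(u′) > 0 such that v(x) − (x·u′ + w′) → 0 as x → −∞. Then for any gain ρ ∈ ℝ^d, bias ε ∈ ℝ^d, and decoder vector W_dec ∈ ℝ^d, there exist constants B⁺, B⁻ ∈ ℝ (the boundary values) such that the decoded output ⟨LN(v(x)), W_dec⟩ → B⁺ as x → +∞ and ⟨LN(v(x)), W_dec⟩ → B⁻ as x → −∞, where ⟨·,·⟩ is the Euclidean inner product on ℝ^d. -/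

import Mathlib

open Filter Real

/-- Coordinate mean `mean(v) = (1/d) ∑ᵢ vᵢ` of a vector in ℝ^d. -/
noncomputable def vecMean {d : ℕ} (v : EuclideanSpace ℝ (Fin d)) : ℝ :=
  (∑ i, v i) / d

/-- Coordinate variance `Var(v) = (1/d) ∑ᵢ (vᵢ − mean(v))²` of a vector in ℝ^d. -/
noncomputable def vecVar {d : ℕ} (v : EuclideanSpace ℝ (Fin d)) : ℝ :=
  (∑ i, (v i - vecMean v) ^ 2) / d

/-- Layer Normalization with gain `ρ` and bias `ε`:
`LN(v) = ((v − mean(v)·𝟙)/√Var(v)) ⊙ ρ + ε` (entrywise). -/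
noncomputable def layerNorm {d : ℕ} (ρ ε : EuclideanSpace ℝ (Fin d))
    (v : EuclideanSpace ℝ (Fin d)) : EuclideanSpace ℝ (Fin d) :=
  WithLp.toLp 2 (fun i : Fin d => (v i - vecMean v) / Real.sqrt (vecVar v) * ρ i + ε i)

lemma aux_tendsto (d : ℕ) (v : ℝ → EuclideanSpace ℝ (Fin d))
    (a b : EuclideanSpace ℝ (Fin d)) (ha : 0 < vecVar a)
    (l : Filter ℝ) (s : ℝ) (hs : s = 1 ∨ s = -1)
    (hsx : ∀ᶠ x in l, 0 < s * x)
    (hinv : Filter.Tendsto (fun x : ℝ => x⁻¹) l (nhds 0))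
    (hv : Filter.Tendsto (fun x : ℝ => v x - (x • a + b)) l (nhds 0))
    (ρ ε Wdec : EuclideanSpace ℝ (Fin d)) :
    Filter.Tendsto (fun x : ℝ => (inner ℝ (layerNorm ρ ε (v x)) Wdec : ℝ)) l
      (nhds (∑ i, (s * (a i - vecMean a) / Real.sqrt (vecVar a) * ρ i + ε i) * Wdec i)) := by
  have hxne : ∀ᶠ x in l, x ≠ 0 := by
    filter_upwards [hsx] with x hx
    intro h; rw [h, mul_zero] at hx; exact lt_irrefl 0 hx
  have hg : ∀ i, Filter.Tendsto (fun x => (v x - (x • a + b)) i) l (nhds 0) := by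
    intro i
    have hc := ((EuclideanSpace.proj i (𝕜 := ℝ)).continuous.tendsto 0).comp hv
    simpa [Function.comp_def] using hc
  have hvxi : ∀ x i, v x i = x * a i + b i + (v x - (x • a + b)) i := by
    intro x i
    simp [PiLp.sub_apply, PiLp.add_apply, PiLp.smul_apply, smul_eq_mul]
  -- coordinates scaled by x⁻¹
  have h0 : ∀ i, Filter.Tendsto (fun x => v x i * x⁻¹) l (nhds (a i)) := by
    intro i
    have hlim : Filter.Tendsto (fun x : ℝ => a i + (b i + (v x - (x • a + b)) i) * x⁻¹)
        l (nhds (a i + (b i + 0) * 0)) :=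
      tendsto_const_nhds.add ((tendsto_const_nhds.add (hg i)).mul hinv)
    rw [add_zero, mul_zero, add_zero] at hlim
    refine hlim.congr' ?_
    filter_upwards [hxne] with x hx
    rw [hvxi x i]
    field_simp
    ring
  have hmean : Filter.Tendsto (fun x => vecMean (v x) * x⁻¹) l (nhds (vecMean a)) := by
    have h1 : Filter.Tendsto (fun x => (∑ i, v x i * x⁻¹) / d) l (nhds ((∑ i, a i) / d)) :=
      (tendsto_finset_sum _ fun i _ => h0 i).div_const d
    refine h1.congr fun x => ?_
    simp only [vecMean]
    rw [← Finset.sum_mul, div_mul_eq_mul_div]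
  have hc : ∀ i, Filter.Tendsto (fun x => (v x i - vecMean (v x)) * x⁻¹) l
      (nhds (a i - vecMean a)) := by
    intro i
    have := (h0 i).sub hmean
    refine this.congr fun x => ?_
    ring
  have hvar : Filter.Tendsto (fun x => vecVar (v x) * (x⁻¹) ^ 2) l (nhds (vecVar a)) := by
    have h1 : Filter.Tendsto (fun x => (∑ i, ((v x i - vecMean (v x)) * x⁻¹) ^ 2) / d) l
        (nhds ((∑ i, (a i - vecMean a) ^ 2) / d)) :=
      (tendsto_finset_sum _ fun i _ => (hc i).pow 2).div_const d
    refine h1.congr fun x => ?_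
    simp only [vecVar]
    rw [div_mul_eq_mul_div, Finset.sum_mul]
    congr 1
    refine Finset.sum_congr rfl fun i _ => ?_
    ring
  have hsqrt : Filter.Tendsto (fun x => Real.sqrt (vecVar (v x)) * (s * x⁻¹)) l
      (nhds (Real.sqrt (vecVar a))) := by
    have h1 : Filter.Tendsto (fun x => Real.sqrt (vecVar (v x) * (x⁻¹) ^ 2)) l
        (nhds (Real.sqrt (vecVar a))) := hvar.sqrt
    refine h1.congr' ?_
    filter_upwards [hsx] with x hx
    have hxne' : x ≠ 0 := by intro h; rw [h, mul_zero] at hx; exact lt_irrefl 0 hx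
    have habs : |x| = s * x := by
      rcases hs with rfl | rfl
      · rw [one_mul] at hx ⊢; exact abs_of_pos hx
      · rw [neg_one_mul] at hx ⊢
        exact abs_of_neg (by linarith)
    have hVnn : 0 ≤ vecVar (v x) := by
      simp only [vecVar]
      positivity
    rw [Real.sqrt_mul hVnn, Real.sqrt_sq_eq_abs, abs_inv, habs]
    rw [mul_inv]
    have hs' : s⁻¹ = s := by rcases hs with rfl | rfl <;> norm_num
    rw [hs', mul_comm s x⁻¹]
  have hsqrtpos : ∀ᶠ x in l, 0 < Real.sqrt (vecVar (v x)) := by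
    have hpos : ∀ᶠ x in l, 0 < Real.sqrt (vecVar (v x)) * (s * x⁻¹) :=
      hsqrt.eventually (eventually_gt_nhds (Real.sqrt_pos.mpr ha))
    filter_upwards [hpos, hsx] with x h1 h2
    rcases mul_pos_iff.mp h1 with ⟨h3, _⟩ | ⟨h3, _⟩
    · exact h3
    · exact absurd (Real.sqrt_nonneg _) (not_le.mpr h3)
  -- the normalized coordinate
  have hfrac : ∀ i, Filter.Tendsto
      (fun x => (v x i - vecMean (v x)) / Real.sqrt (vecVar (v x))) l
      (nhds (s * (a i - vecMean a) / Real.sqrt (vecVar a))) := by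
    intro i
    have hnum : Filter.Tendsto (fun x => (v x i - vecMean (v x)) * x⁻¹ * s) l
        (nhds ((a i - vecMean a) * s)) := (hc i).mul_const s
    have h2 := hnum.div hsqrt (ne_of_gt (Real.sqrt_pos.mpr ha))
    have heq : (a i - vecMean a) * s / Real.sqrt (vecVar a)
        = s * (a i - vecMean a) / Real.sqrt (vecVar a) := by ring
    rw [heq] at h2
    refine h2.congr' ?_
    filter_upwards [hxne, hsqrtpos, hsx] with x hx hp h2x
    have hs0 : s ≠ 0 := by intro h; rw [h, zero_mul] at h2x; exact lt_irrefl 0 h2x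
    rw [Pi.div_apply]
    field_simp
  have hLN : ∀ i, Filter.Tendsto (fun x => layerNorm ρ ε (v x) i) l
      (nhds (s * (a i - vecMean a) / Real.sqrt (vecVar a) * ρ i + ε i)) := by
    intro i
    exact ((hfrac i).mul_const (ρ i)).add (tendsto_const_nhds (x := ε i))
  have hinner : ∀ x, (inner ℝ (layerNorm ρ ε (v x)) Wdec : ℝ)
      = ∑ i, layerNorm ρ ε (v x) i * Wdec i := by
    intro x
    simp [PiLp.inner_apply, RCLike.inner_apply, mul_comm]
  simp only [hinner]
  exact tendsto_finset_sum _ fun i _ => (hLN i).mul_const (Wdec i)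

theorem stmt_11 (d : ℕ) (hd : 1 ≤ d) (v : ℝ → EuclideanSpace ℝ (Fin d))
    (u w : EuclideanSpace ℝ (Fin d)) (hu : 0 < vecVar u)
    (hv : Filter.Tendsto (fun x : ℝ => v x - (x • u + w)) Filter.atTop (nhds 0))
    (u' w' : EuclideanSpace ℝ (Fin d)) (hu' : 0 < vecVar u')
    (hv' : Filter.Tendsto (fun x : ℝ => v x - (x • u' + w')) Filter.atBot (nhds 0))
    (ρ ε Wdec : EuclideanSpace ℝ (Fin d)) :
    ∃ Bplus Bminus : ℝ,
      Filter.Tendsto (fun x : ℝ => (inner ℝ (layerNorm ρ ε (v x)) Wdec : ℝ))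
        Filter.atTop (nhds Bplus) ∧
      Filter.Tendsto (fun x : ℝ => (inner ℝ (layerNorm ρ ε (v x)) Wdec : ℝ))
        Filter.atBot (nhds Bminus) := by
  refine ⟨_, _,
    aux_tendsto d v u w hu Filter.atTop 1 (Or.inl rfl)
      (by filter_upwards [eventually_gt_atTop 0] with x hx; simpa using hx)
      tendsto_inv_atTop_zero hv ρ ε Wdec,
    aux_tendsto d v u' w' hu' Filter.atBot (-1) (Or.inr rfl)
      (by filter_upwards [eventually_lt_atBot 0] with x hx; simpa using hx)
      (by
        have h := (tendsto_neg_atBot_atTop (G := ℝ)).inv_tendsto_atTop.neg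
        rw [neg_zero] at h
        refine h.congr fun x => ?_
        simp [inv_neg]) hv' ρ ε Wdec⟩
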